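/- Let k have characteristic ≠ 2 and let V be a 2-dimensional k-vector space with a skew-symmetric bilinear form ⟨ , ⟩ with ⟨v_1,v_2⟩ = 1. Identify sl_2 with Sym^2(V) via [uv, w] = (1/2)(⟨u,w⟩v + ⟨v,w⟩u). On W = V⊗V⊗V define the symmetric bilinear map [ , ] : W × W → sl_2^{⊕3} by [u⊗v⊗w, u'⊗v'⊗w'] = α_1⟨v,v'⟩⟨w,w'⟩uu' ⊕ α_2⟨u,u'⟩⟨w,w'⟩vv' ⊕ α_3⟨u,u'⟩⟨v,v'⟩ww'. Then the Jacobi-type identity [[x,y],z] + [[y,z],x] + [[x,z],y] = 0 holds for all x, y, z ∈ W if and only if α_1 + α_2 + α_3 = 0. -/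

import Mathlib

namespace Stmt12

variable (k : Type*) [Field k]

def J : Matrix (Fin 2) (Fin 2) k := !![0, 1; -1, 0]

abbrev W (k : Type*) := Fin 2 → Fin 2 → Fin 2 → k

def comp1 (x y : W k) : Matrix (Fin 2) (Fin 2) k :=
  Matrix.of fun a b => (1 / 2) *
    ∑ j, ∑ j', ∑ l, ∑ l',
      J k j j' * J k l l' * (x a j l * y b j' l' + x b j l * y a j' l')

def comp2 (x y : W k) : Matrix (Fin 2) (Fin 2) k :=
  Matrix.of fun a b => (1 / 2) *
    ∑ i, ∑ i', ∑ l, ∑ l',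
      J k i i' * J k l l' * (x i a l * y i' b l' + x i b l * y i' a l')

def comp3 (x y : W k) : Matrix (Fin 2) (Fin 2) k :=
  Matrix.of fun a b => (1 / 2) *
    ∑ i, ∑ i', ∑ j, ∑ j',
      J k i i' * J k j j' * (x i j a * y i' j' b + x i j b * y i' j' a)

def br (α₁ α₂ α₃ : k) (x y : W k) :
    Matrix (Fin 2) (Fin 2) k × Matrix (Fin 2) (Fin 2) k × Matrix (Fin 2) (Fin 2) k :=
  (α₁ • comp1 k x y, α₂ • comp2 k x y, α₃ • comp3 k x y)

def actg (S : Matrix (Fin 2) (Fin 2) k × Matrix (Fin 2) (Fin 2) k ×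
    Matrix (Fin 2) (Fin 2) k) (x : W k) : W k :=
  fun i j l =>
    (∑ a, (S.1 * J k) i a * x a j l) + (∑ a, (S.2.1 * J k) j a * x i a l) +
      (∑ a, (S.2.2 * J k) l a * x i j a)

def dec (u v w : Fin 2 → k) : W k := fun i j l => u i * v j * w l

end Stmt12

set_option maxHeartbeats 4000000 in
open Stmt12 in
theorem stmt12 (k : Type*) [Field k] (hk : ringChar k ≠ 2) (α₁ α₂ α₃ : k) :
    (∀ x y z : W k,
        actg k (br k α₁ α₂ α₃ x y) z + actg k (br k α₁ α₂ α₃ y z) x +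
          actg k (br k α₁ α₂ α₃ x z) y = 0) ↔
      α₁ + α₂ + α₃ = 0 := by
  constructor
  · intro h
    have htwo : (2 : k) ≠ 0 := by
      simpa using Ring.two_ne_zero (by simpa using hk)
    have h0 := congrFun (congrFun (congrFun (h (dec k ![1,0] ![1,0] ![1,0])
      (dec k ![0,1] ![0,1] ![0,1]) (dec k ![1,0] ![1,0] ![1,0])) 0) 0) 0
    simp only [actg, br, comp1, comp2, comp3, J, dec, Matrix.mul_apply,
      Fin.sum_univ_two, Matrix.smul_apply, Matrix.of_apply, Matrix.cons_val',
      Matrix.cons_val_zero, Matrix.cons_val_one, Matrix.head_cons,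
      Matrix.head_fin_const, Matrix.empty_val', Matrix.cons_val_fin_one,
      smul_eq_mul, Pi.add_apply, Pi.zero_apply,
      mul_zero, zero_mul, mul_one, one_mul, add_zero, zero_add, neg_zero,
      neg_mul, one_mul] at h0
    field_simp at h0
    have h8 : (8 : k) ≠ 0 := by
      have := pow_ne_zero 3 htwo
      norm_num at this
      exact this
    have h9 := mul_left_cancel₀ h8 (show (8 : k) * (α₁ + α₂ + α₃) = 8 * 0 by
      linear_combination -4 * h0)
    simpa using h9
  · intro h x y z
    have h3 : α₃ = -(α₁ + α₂) := by linear_combination h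
    subst h3
    funext i j l
    fin_cases i <;> fin_cases j <;> fin_cases l <;>
      · simp only [actg, br, comp1, comp2, comp3, J, Matrix.mul_apply,
          Fin.sum_univ_two, Matrix.smul_apply, Matrix.of_apply, Matrix.cons_val',
          Matrix.cons_val_zero, Matrix.cons_val_one, Matrix.head_cons,
          Matrix.head_fin_const, Matrix.empty_val', Matrix.cons_val_fin_one,
          smul_eq_mul, Pi.add_apply, Pi.zero_apply, mul_zero, zero_mul, mul_one,
          one_mul, add_zero, zero_add, neg_mul, neg_neg, mul_neg, Fin.mk_zero,
          Fin.mk_one, Fin.isValue]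
        ring
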